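/- Let p be a probability density on ℝ, let M > 0, and let f, f_0: ℝ → ℝ be measurable with sup_x |f(x)| ≤ M and sup_x |f_0(x)| ≤ M. Let ψ_f and ψ_{f_0} be probability densities that are invariant for f and f_0 respectively, and assume ρ := (1/2) sup_{x_1, x_2 ∈ [−M, M]} ∫ |p(x − x_1) − p(x − x_2)| dx < 1. Then ∫ ( √(ψ_f(x)) − √(ψ_{f_0}(x)) )² dx ≤ (1 − ρ)^{−1} · sup_{u ∈ [0, ‖f − f_0‖_∞]} ∫ |p(x) − p(x − u)| dx, where ‖f − f_0‖_∞ = sup_x |f(x) − f_0(x)|. -/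

import Mathlib

open MeasureTheory Real

lemma ofReal_integral_le_lintegral {f : ℝ → ℝ} (hf : ∀ x, 0 ≤ f x) :
    ENNReal.ofReal (∫ x, f x) ≤ ∫⁻ x, ENNReal.ofReal (f x) := by
  by_cases h : Integrable f
  · exact le_of_eq (MeasureTheory.ofReal_integral_eq_lintegral_ofReal h
      (Filter.Eventually.of_forall hf))
  · rw [integral_undef h]; simp

set_option maxHeartbeats 1000000 in
/-- Hellinger-type bound between the stationary densities of two autoregressive
processes (Lemma 6.1 of Grama–Neumann). -/
theorem hellinger_stationary_densities
    (p : ℝ → ℝ) (hp_meas : Measurable p) (hp_nonneg : ∀ x, 0 ≤ p x)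
    (hp_int : ∫ x, p x = 1)
    (M : ℝ) (hM : 0 < M)
    (f f0 : ℝ → ℝ) (hf_meas : Measurable f) (hf0_meas : Measurable f0)
    (hf_bdd : ∀ x, |f x| ≤ M) (hf0_bdd : ∀ x, |f0 x| ≤ M)
    (ψf ψf0 : ℝ → ℝ)
    (hψf_meas : Measurable ψf) (hψf_nonneg : ∀ x, 0 ≤ ψf x) (hψf_int : ∫ x, ψf x = 1)
    (hψf0_meas : Measurable ψf0) (hψf0_nonneg : ∀ x, 0 ≤ ψf0 x) (hψf0_int : ∫ x, ψf0 x = 1)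
    (hinv_f : ∀ᵐ x ∂(volume : Measure ℝ), ψf x = ∫ y, p (x - f y) * ψf y)
    (hinv_f0 : ∀ᵐ x ∂(volume : Measure ℝ), ψf0 x = ∫ y, p (x - f0 y) * ψf0 y)
    (ρ : ℝ)
    (hρ_def : ρ = sSup ((fun q : ℝ × ℝ => (1 / 2) * ∫ x, |p (x - q.1) - p (x - q.2)|) ''
        (Set.Icc (-M) M ×ˢ Set.Icc (-M) M)))
    (hρ_lt_one : ρ < 1) :
    ∫ x, (Real.sqrt (ψf x) - Real.sqrt (ψf0 x)) ^ 2
      ≤ (1 - ρ)⁻¹ *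
        sSup ((fun u : ℝ => ∫ x, |p x - p (x - u)|) ''
          Set.Icc 0 (⨆ x, |f x - f0 x|)) := by
  classical
  set S := ⨆ x, |f x - f0 x| with hSdef
  set D := sSup ((fun u : ℝ => ∫ x, |p x - p (x - u)|) '' Set.Icc 0 S) with hDdef
  -- basic integrability
  have hp_i : Integrable p := by
    by_contra h; rw [integral_undef h] at hp_int; norm_num at hp_int
  have hψf_i : Integrable ψf := by
    by_contra h; rw [integral_undef h] at hψf_int; norm_num at hψf_int
  have hψf0_i : Integrable ψf0 := by
    by_contra h; rw [integral_undef h] at hψf0_int; norm_num at hψf0_int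
  have hp_shift_i : ∀ c : ℝ, Integrable (fun x => p (x - c)) := fun c => hp_i.comp_sub_right c
  have hp_shift_int : ∀ c : ℝ, ∫ x, p (x - c) = 1 := fun c => by
    rw [integral_sub_right_eq_self p c]; exact hp_int
  -- lintegral facts
  have hlp : ∫⁻ x, ENNReal.ofReal (p x) = 1 := by
    rw [← MeasureTheory.ofReal_integral_eq_lintegral_ofReal hp_i
      (Filter.Eventually.of_forall hp_nonneg), hp_int, ENNReal.ofReal_one]
  have hlp_shift : ∀ c : ℝ, ∫⁻ x, ENNReal.ofReal (p (x - c)) = 1 := fun c => by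
    rw [lintegral_sub_right_eq_self (fun x => ENNReal.ofReal (p x)) c]; exact hlp
  have hlψf : ∫⁻ y, ENNReal.ofReal (ψf y) = 1 := by
    rw [← MeasureTheory.ofReal_integral_eq_lintegral_ofReal hψf_i
      (Filter.Eventually.of_forall hψf_nonneg), hψf_int, ENNReal.ofReal_one]
  have hlψf0 : ∫⁻ y, ENNReal.ofReal (ψf0 y) = 1 := by
    rw [← MeasureTheory.ofReal_integral_eq_lintegral_ofReal hψf0_i
      (Filter.Eventually.of_forall hψf0_nonneg), hψf0_int, ENNReal.ofReal_one]
  -- generic a.e. integrability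
  have key : ∀ (h : ℝ → ℝ), Measurable h → ∀ (ψ : ℝ → ℝ), Measurable ψ → (∀ x, 0 ≤ ψ x) →
      (∫⁻ y, ENNReal.ofReal (ψ y) = 1) →
      ∀ᵐ x : ℝ ∂volume, Integrable (fun y => p (x - h y) * ψ y) := by
    intro h hh ψ hψm hψ0 hψ1
    have hmeas : Measurable fun q : ℝ × ℝ =>
        ENNReal.ofReal (p (q.1 - h q.2)) * ENNReal.ofReal (ψ q.2) :=
      ((hp_meas.comp (measurable_fst.sub (hh.comp measurable_snd))).ennreal_ofReal).mul
        ((hψm.comp measurable_snd).ennreal_ofReal)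
    have hswap : ∫⁻ x, ∫⁻ y, ENNReal.ofReal (p (x - h y)) * ENNReal.ofReal (ψ y) = 1 := by
      rw [lintegral_lintegral_swap hmeas.aemeasurable]
      have hin : ∀ y : ℝ, ∫⁻ x, ENNReal.ofReal (p (x - h y)) * ENNReal.ofReal (ψ y)
          = ENNReal.ofReal (ψ y) := by
        intro y
        rw [lintegral_mul_const' (ENNReal.ofReal (ψ y)) _ ENNReal.ofReal_ne_top,
          hlp_shift (h y), one_mul]
      simp_rw [hin]; exact hψ1
    have hfin : ∀ᵐ x : ℝ ∂volume,
        (∫⁻ y, ENNReal.ofReal (p (x - h y)) * ENNReal.ofReal (ψ y)) < ⊤ := by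
      apply ae_lt_top hmeas.lintegral_prod_right'
      rw [hswap]; exact ENNReal.one_ne_top
    filter_upwards [hfin] with x hx
    refine ⟨((hp_meas.comp (measurable_const.sub hh)).mul hψm).aestronglyMeasurable, ?_⟩
    rw [hasFiniteIntegral_iff_ofReal (Filter.Eventually.of_forall fun y =>
      mul_nonneg (hp_nonneg _) (hψ0 y))]
    simpa [ENNReal.ofReal_mul (hp_nonneg _)] using hx
  have hIf : ∀ᵐ x : ℝ ∂volume, Integrable (fun y => p (x - f y) * ψf y) :=
    key f hf_meas ψf hψf_meas hψf_nonneg hlψf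
  have hIf0 : ∀ᵐ x : ℝ ∂volume, Integrable (fun y => p (x - f y) * ψf0 y) :=
    key f hf_meas ψf0 hψf0_meas hψf0_nonneg hlψf0
  have hIf00 : ∀ᵐ x : ℝ ∂volume, Integrable (fun y => p (x - f0 y) * ψf0 y) :=
    key f0 hf0_meas ψf0 hψf0_meas hψf0_nonneg hlψf0
  -- gp gm
  set g := fun y => ψf y - ψf0 y with hg
  set gp := fun y => max (ψf y - ψf0 y) 0 with hgp
  set gm := fun y => max (ψf0 y - ψf y) 0 with hgm
  have hgp_meas : Measurable gp := (hψf_meas.sub hψf0_meas).max measurable_const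
  have hgm_meas : Measurable gm := (hψf0_meas.sub hψf_meas).max measurable_const
  have hgp_nonneg : ∀ y, 0 ≤ gp y := fun y => le_max_right _ _
  have hgm_nonneg : ∀ y, 0 ≤ gm y := fun y => le_max_right _ _
  have hgp_le : ∀ y, gp y ≤ ψf y := fun y =>
    max_le (by have := hψf0_nonneg y; linarith) (hψf_nonneg y)
  have hgm_le : ∀ y, gm y ≤ ψf0 y := fun y =>
    max_le (by have := hψf_nonneg y; linarith) (hψf0_nonneg y)
  have hsub : ∀ y, gp y - gm y = g y := by
    intro y; simp only [hgp, hgm, hg, max_def]; split_ifs <;> linarith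
  have habs : ∀ y, gp y + gm y = |g y| := by
    intro y; simp only [hgp, hgm, hg, max_def]
    rcases le_total (ψf y) (ψf0 y) with h | h
    · rw [abs_of_nonpos (by linarith)]; split_ifs <;> linarith
    · rw [abs_of_nonneg (by linarith)]; split_ifs <;> linarith
  have hgp_i : Integrable gp := hψf_i.mono' hgp_meas.aestronglyMeasurable
    (Filter.Eventually.of_forall fun y => by
      rw [Real.norm_eq_abs, abs_of_nonneg (hgp_nonneg y)]; exact hgp_le y)
  have hgm_i : Integrable gm := hψf0_i.mono' hgm_meas.aestronglyMeasurable
    (Filter.Eventually.of_forall fun y => by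
      rw [Real.norm_eq_abs, abs_of_nonneg (hgm_nonneg y)]; exact hgm_le y)
  set m := ∫ y, gp y with hmdef
  have hm : ∫ y, gm y = m := by
    have h1 : ∫ y, (gp y - gm y) = 0 := by
      have h2 : ∫ y, (gp y - gm y) = ∫ y, g y := by
        apply integral_congr_ae; exact Filter.Eventually.of_forall fun y => hsub y
      rw [h2, hg]
      rw [integral_sub hψf_i hψf0_i, hψf_int, hψf0_int]; ring
    rw [integral_sub hgp_i hgm_i] at h1; linarith
  have hm_nonneg : 0 ≤ m := by
    rw [hmdef]; exact integral_nonneg hgp_nonneg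
  set T := ∫ y, |g y| with hTdef
  have hT_eq : T = 2 * m := by
    rw [hTdef]
    rw [integral_congr_ae (Filter.Eventually.of_forall fun y => (habs y).symm),
      integral_add hgp_i hgm_i, hm, ← hmdef]; ring
  -- ρ and D facts
  have habs_diff_i : ∀ a b : ℝ, Integrable (fun x => |p (x - a) - p (x - b)|) :=
    fun a b => ((hp_shift_i a).sub (hp_shift_i b)).abs
  have hdiff_le : ∀ a b : ℝ, ∫ x, |p (x - a) - p (x - b)| ≤ 2 := by
    intro a b
    calc ∫ x, |p (x - a) - p (x - b)| ≤ ∫ x, (p (x - a) + p (x - b)) :=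
          integral_mono (habs_diff_i a b) ((hp_shift_i a).add (hp_shift_i b))
            (fun x => (abs_sub _ _).trans (by
              rw [abs_of_nonneg (hp_nonneg _), abs_of_nonneg (hp_nonneg _)]))
      _ = 2 := by
          rw [integral_add (hp_shift_i a) (hp_shift_i b), hp_shift_int a, hp_shift_int b]
          norm_num
  have hρ_bdd : BddAbove ((fun q : ℝ × ℝ => (1/2) * ∫ x, |p (x - q.1) - p (x - q.2)|) ''
      (Set.Icc (-M) M ×ˢ Set.Icc (-M) M)) := by
    refine ⟨1, ?_⟩; rintro t ⟨q, _, rfl⟩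
    have := hdiff_le q.1 q.2; simp only; linarith
  have hρ_nonneg : 0 ≤ ρ := by
    rw [hρ_def]
    apply le_csSup hρ_bdd
    refine ⟨(0, 0), ?_, by simp⟩
    simp only [Set.mem_prod, Set.mem_Icc]
    refine ⟨⟨by linarith, by linarith⟩, by linarith, by linarith⟩
  have hρ_ge : ∀ a b : ℝ, |a| ≤ M → |b| ≤ M →
      ∫ x, |p (x - a) - p (x - b)| ≤ 2 * ρ := by
    intro a b ha hb
    have hmem : (1/2) * ∫ x, |p (x - a) - p (x - b)| ∈
        ((fun q : ℝ × ℝ => (1/2) * ∫ x, |p (x - q.1) - p (x - q.2)|) ''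
          (Set.Icc (-M) M ×ˢ Set.Icc (-M) M)) :=
      ⟨(a, b), ⟨abs_le.1 ha, abs_le.1 hb⟩, rfl⟩
    have := le_csSup hρ_bdd hmem
    rw [← hρ_def] at this; linarith
  have hS_nonneg : 0 ≤ S := Real.iSup_nonneg fun x => abs_nonneg _
  have hrange_bdd : BddAbove (Set.range fun x => |f x - f0 x|) := by
    refine ⟨2 * M, ?_⟩; rintro t ⟨x, rfl⟩
    rcases abs_le.1 (hf_bdd x) with ⟨h1, h2⟩
    rcases abs_le.1 (hf0_bdd x) with ⟨h3, h4⟩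
    simp only; rw [abs_le]; constructor <;> linarith
  have hD_bdd : BddAbove ((fun u : ℝ => ∫ x, |p x - p (x - u)|) '' Set.Icc 0 S) := by
    refine ⟨2, ?_⟩; rintro t ⟨u, _, rfl⟩
    have h := hdiff_le 0 u
    simp only [sub_zero] at h
    simpa using h
  have hD_nonneg : 0 ≤ D := by
    rw [hDdef]
    apply le_csSup hD_bdd
    exact ⟨0, ⟨le_refl 0, hS_nonneg⟩, by simp⟩
  have hshift_eq : ∀ a b : ℝ, ∫ x, |p (x - a) - p (x - b)| = ∫ x, |p x - p (x - (b - a))| := by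
    intro a b
    calc ∫ x, |p (x - a) - p (x - b)|
        = ∫ x, |p (x - a) - p (x - a - (b - a))| := by
          congr 1; ext x; have : x - a - (b - a) = x - b := by ring
          rw [this]
      _ = ∫ x, |p x - p (x - (b - a))| :=
          integral_sub_right_eq_self (fun x => |p x - p (x - (b - a))|) a
  have hD_ge : ∀ y : ℝ, ∫ x, |p (x - f y) - p (x - f0 y)| ≤ D := by
    intro y
    have hby : |f y - f0 y| ≤ S := le_ciSup hrange_bdd y
    rcases le_total (f y) (f0 y) with hle | hle
    · rw [hshift_eq (f y) (f0 y)]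
      apply le_csSup hD_bdd
      refine ⟨f0 y - f y, ⟨by linarith, ?_⟩, rfl⟩
      rcases abs_le.1 hby with ⟨h1, h2⟩; linarith
    · have h0 : ∫ x, |p (x - f y) - p (x - f0 y)| = ∫ x, |p (x - f0 y) - p (x - f y)| := by
        congr 1; ext x; rw [abs_sub_comm]
      rw [h0, hshift_eq (f0 y) (f y)]
      apply le_csSup hD_bdd
      refine ⟨f y - f0 y, ⟨by linarith, ?_⟩, rfl⟩
      rcases abs_le.1 hby with ⟨h1, h2⟩; linarith
  -- integrability of p * gp, p * gm
  have hIgp : ∀ᵐ x : ℝ ∂volume, Integrable (fun y => p (x - f y) * gp y) := by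
    filter_upwards [hIf] with x hx
    exact hx.mono' ((hp_meas.comp (measurable_const.sub hf_meas)).mul
        hgp_meas).aestronglyMeasurable
      (Filter.Eventually.of_forall fun y => by
        rw [Real.norm_eq_abs, abs_of_nonneg (mul_nonneg (hp_nonneg _) (hgp_nonneg y))]
        exact mul_le_mul_of_nonneg_left (hgp_le y) (hp_nonneg _))
  have hIgm : ∀ᵐ x : ℝ ∂volume, Integrable (fun y => p (x - f y) * gm y) := by
    filter_upwards [hIf0] with x hx
    exact hx.mono' ((hp_meas.comp (measurable_const.sub hf_meas)).mul
        hgm_meas).aestronglyMeasurable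
      (Filter.Eventually.of_forall fun y => by
        rw [Real.norm_eq_abs, abs_of_nonneg (mul_nonneg (hp_nonneg _) (hgm_nonneg y))]
        exact mul_le_mul_of_nonneg_left (hgm_le y) (hp_nonneg _))
  set A := fun x => |∫ y, p (x - f y) * g y| with hA
  set B := fun x => ∫ y, |p (x - f y) - p (x - f0 y)| * ψf0 y with hB
  -- pointwise a.e. bound
  have hptwise : ∀ᵐ x : ℝ ∂volume, |g x| ≤ A x + B x := by
    filter_upwards [hinv_f, hinv_f0, hIf, hIf0, hIf00] with x h1 h2 h3 h4 h5
    have a1 : ∫ y, p (x - f y) * g y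
        = (∫ y, p (x - f y) * ψf y) - ∫ y, p (x - f y) * ψf0 y := by
      rw [← integral_sub h3 h4]; congr 1; ext y; simp only [hg]; ring
    have a2 : ∫ y, (p (x - f y) - p (x - f0 y)) * ψf0 y
        = (∫ y, p (x - f y) * ψf0 y) - ∫ y, p (x - f0 y) * ψf0 y := by
      rw [← integral_sub h4 h5]; congr 1; ext y; ring
    have e1 : g x = (∫ y, p (x - f y) * g y) + ∫ y, (p (x - f y) - p (x - f0 y)) * ψf0 y := by
      rw [a1, a2]; simp only [hg]; rw [← h1, ← h2]; ring
    have e2 : |∫ y, (p (x - f y) - p (x - f0 y)) * ψf0 y| ≤ B x := by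
      have hn : ‖∫ y, (p (x - f y) - p (x - f0 y)) * ψf0 y‖
          ≤ ∫ y, ‖(p (x - f y) - p (x - f0 y)) * ψf0 y‖ :=
        norm_integral_le_integral_norm _
      rw [Real.norm_eq_abs] at hn
      have heq : (fun y => ‖(p (x - f y) - p (x - f0 y)) * ψf0 y‖)
          = fun y => |p (x - f y) - p (x - f0 y)| * ψf0 y :=
        funext fun y => by rw [Real.norm_eq_abs, abs_mul, abs_of_nonneg (hψf0_nonneg y)]
      rw [heq] at hn
      exact hn
    calc |g x| ≤ |∫ y, p (x - f y) * g y| + |∫ y, (p (x - f y) - p (x - f0 y)) * ψf0 y| := by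
          rw [e1]; exact abs_add_le _ _
      _ ≤ A x + B x := by rw [hA]; exact add_le_add le_rfl e2
  -- measurability of A
  have hA_meas : AEMeasurable (fun x => ENNReal.ofReal (A x)) (volume : Measure ℝ) := by
    have h1 : StronglyMeasurable fun x : ℝ => ∫ y, p (x - f y) * g y :=
      StronglyMeasurable.integral_prod_right'
        (f := fun q : ℝ × ℝ => p (q.1 - f q.2) * g q.2)
        (((hp_meas.comp (measurable_fst.sub (hf_meas.comp measurable_snd))).mul
          ((hψf_meas.sub hψf0_meas).comp measurable_snd)).stronglyMeasurable)
    exact ((continuous_abs.measurable.comp h1.measurable).ennreal_ofReal).aemeasurable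
  -- bound for B part
  have hB_bound : ∫⁻ x, ENNReal.ofReal (B x) ≤ ENNReal.ofReal D := by
    have hmeasB : Measurable fun q : ℝ × ℝ =>
        ENNReal.ofReal |p (q.1 - f q.2) - p (q.1 - f0 q.2)| * ENNReal.ofReal (ψf0 q.2) := by
      apply Measurable.fun_mul
      · exact (continuous_abs.measurable.comp
          ((hp_meas.comp (measurable_fst.sub (hf_meas.comp measurable_snd))).sub
           (hp_meas.comp (measurable_fst.sub (hf0_meas.comp measurable_snd))))).ennreal_ofReal
      · exact (hψf0_meas.comp measurable_snd).ennreal_ofReal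
    have hBx : ∀ x : ℝ, ENNReal.ofReal (B x)
        ≤ ∫⁻ y, ENNReal.ofReal |p (x - f y) - p (x - f0 y)| * ENNReal.ofReal (ψf0 y) := by
      intro x
      refine le_trans (ofReal_integral_le_lintegral fun y =>
        mul_nonneg (abs_nonneg _) (hψf0_nonneg y)) (le_of_eq ?_)
      exact lintegral_congr fun y => ENNReal.ofReal_mul (abs_nonneg _)
    calc ∫⁻ x, ENNReal.ofReal (B x)
        ≤ ∫⁻ x, ∫⁻ y, ENNReal.ofReal |p (x - f y) - p (x - f0 y)| * ENNReal.ofReal (ψf0 y) :=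
          lintegral_mono hBx
      _ = ∫⁻ y, ∫⁻ x, ENNReal.ofReal |p (x - f y) - p (x - f0 y)| * ENNReal.ofReal (ψf0 y) :=
          lintegral_lintegral_swap hmeasB.aemeasurable
      _ ≤ ∫⁻ y, ENNReal.ofReal D * ENNReal.ofReal (ψf0 y) := by
          apply lintegral_mono; intro y
          dsimp only
          rw [lintegral_mul_const' (ENNReal.ofReal (ψf0 y)) _ ENNReal.ofReal_ne_top]
          have hxint : ∫⁻ x, ENNReal.ofReal |p (x - f y) - p (x - f0 y)|
              = ENNReal.ofReal (∫ x, |p (x - f y) - p (x - f0 y)|) :=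
            (MeasureTheory.ofReal_integral_eq_lintegral_ofReal (habs_diff_i _ _)
              (Filter.Eventually.of_forall fun x => abs_nonneg _)).symm
          rw [hxint]
          exact mul_le_mul_of_nonneg_right (ENNReal.ofReal_le_ofReal (hD_ge y)) (by positivity)
      _ = ENNReal.ofReal D * 1 := by
          rw [lintegral_const_mul' (ENNReal.ofReal D) _ ENNReal.ofReal_ne_top, hlψf0]
      _ = ENNReal.ofReal D := mul_one _
  -- bound for A part
  have hA_bound : ∫⁻ x, ENNReal.ofReal (A x) ≤ ENNReal.ofReal (ρ * T) := by
    rcases eq_or_lt_of_le hm_nonneg with hm0 | hmpos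
    · -- m = 0
      have hgp0 : gp =ᵐ[volume] 0 :=
        (integral_eq_zero_iff_of_nonneg hgp_nonneg hgp_i).1 (by rw [← hmdef, ← hm0])
      have hgm0 : gm =ᵐ[volume] 0 :=
        (integral_eq_zero_iff_of_nonneg hgm_nonneg hgm_i).1 (by rw [hm, ← hm0])
      have hg0 : g =ᵐ[volume] (0 : ℝ → ℝ) := by
        filter_upwards [hgp0, hgm0] with y hy1 hy2
        have := hsub y
        simp only [Pi.zero_apply] at hy1 hy2 ⊢
        rw [← this, hy1, hy2]; ring
      have hA0 : ∀ x, A x = 0 := by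
        intro x
        have hz : (fun y => p (x - f y) * g y) =ᵐ[volume] (0 : ℝ → ℝ) := by
          filter_upwards [hg0] with y hy
          simp only [Pi.zero_apply] at hy ⊢; rw [hy]; ring
        simp only [hA]
        rw [integral_congr_ae hz]; simp
      simp only [hA0, ENNReal.ofReal_zero, lintegral_const, zero_mul]
      exact zero_le
    · -- m > 0
      have hFmeas : Measurable fun r : ℝ × ℝ × ℝ =>
          ENNReal.ofReal |p (r.1 - f r.2.1) - p (r.1 - f r.2.2)| *
            (ENNReal.ofReal (gp r.2.1) * ENNReal.ofReal (gm r.2.2)) := by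
        refine Measurable.fun_mul ?_ (Measurable.fun_mul ?_ ?_)
        · exact (continuous_abs.measurable.comp
            ((hp_meas.comp (measurable_fst.sub
              (hf_meas.comp (measurable_fst.comp measurable_snd)))).sub
             (hp_meas.comp (measurable_fst.sub
              (hf_meas.comp (measurable_snd.comp measurable_snd)))))).ennreal_ofReal
        · exact (hgp_meas.comp (measurable_fst.comp measurable_snd)).ennreal_ofReal
        · exact (hgm_meas.comp (measurable_snd.comp measurable_snd)).ennreal_ofReal
      have hcore : ∀ᵐ x : ℝ ∂volume, ENNReal.ofReal (m * A x)
          ≤ ∫⁻ y₁, ∫⁻ y₂, ENNReal.ofReal |p (x - f y₁) - p (x - f y₂)| *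
              (ENNReal.ofReal (gp y₁) * ENNReal.ofReal (gm y₂)) := by
        filter_upwards [hIgp, hIgm] with x hxp hxm
        set U := ∫ y, p (x - f y) * gp y with hU
        set V := ∫ y, p (x - f y) * gm y with hV
        have hAx : A x = |U - V| := by
          simp only [hA]
          rw [hU, hV, ← integral_sub hxp hxm]
          congr 1
          apply integral_congr_ae
          refine Filter.Eventually.of_forall fun y => ?_
          dsimp only
          rw [← hsub y]; ring
        have hinner : ∀ y₁ : ℝ,
            (∫ y₂, (p (x - f y₁) - p (x - f y₂)) * (gp y₁ * gm y₂))
              = m * (p (x - f y₁) * gp y₁) - V * gp y₁ := by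
          intro y₁
          have i1 : Integrable (fun y₂ => (p (x - f y₁) * gp y₁) * gm y₂) := hgm_i.const_mul _
          have i2 : Integrable (fun y₂ => gp y₁ * (p (x - f y₂) * gm y₂)) := hxm.const_mul _
          have heq2 : (fun y₂ => (p (x - f y₁) - p (x - f y₂)) * (gp y₁ * gm y₂))
              = fun y₂ => (p (x - f y₁) * gp y₁) * gm y₂ - gp y₁ * (p (x - f y₂) * gm y₂) :=
            funext fun y₂ => by ring
          rw [heq2, integral_sub i1 i2, integral_const_mul, integral_const_mul, hm, ← hV]
          ring
        have houter : (∫ y₁, (m * (p (x - f y₁) * gp y₁) - V * gp y₁)) = m * U - V * m := by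
          rw [integral_sub (hxp.const_mul m) (hgp_i.const_mul V), integral_const_mul,
            integral_const_mul, ← hU, ← hmdef]
        have hiter : (∫ y₁, ∫ y₂, (p (x - f y₁) - p (x - f y₂)) * (gp y₁ * gm y₂))
            = m * U - V * m := by
          rw [integral_congr_ae (Filter.Eventually.of_forall fun y₁ => hinner y₁)]
          exact houter
        have hmabs : m * |U - V| = |m * U - V * m| := by
          rcases le_total V U with h | h
          · have h2 : 0 ≤ m * U - V * m := by
              have h3 := mul_nonneg hm_nonneg (sub_nonneg.2 h); nlinarith
            rw [abs_of_nonneg (by linarith), abs_of_nonneg h2]; ring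
          · have h2 : m * U - V * m ≤ 0 := by
              have h3 := mul_nonneg hm_nonneg (sub_nonneg.2 h); nlinarith
            rw [abs_of_nonpos (by linarith), abs_of_nonpos h2]; ring
        have hmA : m * A x
            = |∫ y₁, ∫ y₂, (p (x - f y₁) - p (x - f y₂)) * (gp y₁ * gm y₂)| := by
          rw [hAx, hmabs, hiter]
        rw [hmA]
        have step1 : |∫ y₁, ∫ y₂, (p (x - f y₁) - p (x - f y₂)) * (gp y₁ * gm y₂)|
            ≤ ∫ y₁, |∫ y₂, (p (x - f y₁) - p (x - f y₂)) * (gp y₁ * gm y₂)| := by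
          have hn : ‖∫ y₁, ∫ y₂, (p (x - f y₁) - p (x - f y₂)) * (gp y₁ * gm y₂)‖
              ≤ ∫ y₁, ‖∫ y₂, (p (x - f y₁) - p (x - f y₂)) * (gp y₁ * gm y₂)‖ :=
            norm_integral_le_integral_norm _
          simpa [Real.norm_eq_abs] using hn
        refine le_trans (ENNReal.ofReal_le_ofReal step1) ?_
        refine le_trans (ofReal_integral_le_lintegral fun y₁ => abs_nonneg _) ?_
        apply lintegral_mono; intro y₁
        have step2 : |∫ y₂, (p (x - f y₁) - p (x - f y₂)) * (gp y₁ * gm y₂)|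
            ≤ ∫ y₂, |(p (x - f y₁) - p (x - f y₂)) * (gp y₁ * gm y₂)| := by
          have hn : ‖∫ y₂, (p (x - f y₁) - p (x - f y₂)) * (gp y₁ * gm y₂)‖
              ≤ ∫ y₂, ‖(p (x - f y₁) - p (x - f y₂)) * (gp y₁ * gm y₂)‖ :=
            norm_integral_le_integral_norm _
          simpa only [Real.norm_eq_abs] using hn
        refine le_trans (ENNReal.ofReal_le_ofReal step2) ?_
        refine le_trans (ofReal_integral_le_lintegral fun y₂ => abs_nonneg _) (le_of_eq ?_)
        apply lintegral_congr; intro y₂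
        rw [abs_mul, abs_of_nonneg (mul_nonneg (hgp_nonneg y₁) (hgm_nonneg y₂)),
          ENNReal.ofReal_mul (abs_nonneg _), ENNReal.ofReal_mul (hgp_nonneg y₁)]
      have hlgp : ∫⁻ y, ENNReal.ofReal (gp y) = ENNReal.ofReal m := by
        rw [← MeasureTheory.ofReal_integral_eq_lintegral_ofReal hgp_i
          (Filter.Eventually.of_forall hgp_nonneg), ← hmdef]
      have hlgm : ∫⁻ y, ENNReal.ofReal (gm y) = ENNReal.ofReal m := by
        rw [← MeasureTheory.ofReal_integral_eq_lintegral_ofReal hgm_i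
          (Filter.Eventually.of_forall hgm_nonneg), hm]
      have hswap_bound : ∫⁻ x, ∫⁻ y₁, ∫⁻ y₂,
            ENNReal.ofReal |p (x - f y₁) - p (x - f y₂)| *
              (ENNReal.ofReal (gp y₁) * ENNReal.ofReal (gm y₂))
          ≤ ENNReal.ofReal (2 * ρ) * (ENNReal.ofReal m * ENNReal.ofReal m) := by
        have hG : Measurable fun q : ℝ × ℝ => ∫⁻ y₂,
            ENNReal.ofReal |p (q.1 - f q.2) - p (q.1 - f y₂)| *
              (ENNReal.ofReal (gp q.2) * ENNReal.ofReal (gm y₂)) := by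
          apply Measurable.lintegral_prod_right'
            (f := fun r : (ℝ × ℝ) × ℝ =>
              ENNReal.ofReal |p (r.1.1 - f r.1.2) - p (r.1.1 - f r.2)| *
                (ENNReal.ofReal (gp r.1.2) * ENNReal.ofReal (gm r.2)))
          refine Measurable.fun_mul ?_ (Measurable.fun_mul ?_ ?_)
          · exact (continuous_abs.measurable.comp
              ((hp_meas.comp ((measurable_fst.comp measurable_fst).sub
                (hf_meas.comp (measurable_snd.comp measurable_fst)))).sub
               (hp_meas.comp ((measurable_fst.comp measurable_fst).sub
                (hf_meas.comp measurable_snd))))).ennreal_ofReal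
          · exact (hgp_meas.comp (measurable_snd.comp measurable_fst)).ennreal_ofReal
          · exact (hgm_meas.comp measurable_snd).ennreal_ofReal
        calc ∫⁻ x, ∫⁻ y₁, ∫⁻ y₂,
              ENNReal.ofReal |p (x - f y₁) - p (x - f y₂)| *
                (ENNReal.ofReal (gp y₁) * ENNReal.ofReal (gm y₂))
            = ∫⁻ y₁, ∫⁻ x, ∫⁻ y₂,
              ENNReal.ofReal |p (x - f y₁) - p (x - f y₂)| *
                (ENNReal.ofReal (gp y₁) * ENNReal.ofReal (gm y₂)) :=
              lintegral_lintegral_swap hG.aemeasurable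
          _ ≤ ∫⁻ y₁, ENNReal.ofReal (gp y₁) * (ENNReal.ofReal (2 * ρ) * ENNReal.ofReal m) := by
              apply lintegral_mono; intro y₁
              have hG2 : Measurable fun q : ℝ × ℝ =>
                  ENNReal.ofReal |p (q.1 - f y₁) - p (q.1 - f q.2)| *
                    (ENNReal.ofReal (gp y₁) * ENNReal.ofReal (gm q.2)) := by
                refine Measurable.fun_mul ?_ (Measurable.fun_mul measurable_const ?_)
                · exact (continuous_abs.measurable.comp
                    ((hp_meas.comp (measurable_fst.sub measurable_const)).sub
                     (hp_meas.comp (measurable_fst.sub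
                       (hf_meas.comp measurable_snd))))).ennreal_ofReal
                · exact (hgm_meas.comp measurable_snd).ennreal_ofReal
              calc ∫⁻ x, ∫⁻ y₂,
                    ENNReal.ofReal |p (x - f y₁) - p (x - f y₂)| *
                      (ENNReal.ofReal (gp y₁) * ENNReal.ofReal (gm y₂))
                  = ∫⁻ y₂, ∫⁻ x,
                    ENNReal.ofReal |p (x - f y₁) - p (x - f y₂)| *
                      (ENNReal.ofReal (gp y₁) * ENNReal.ofReal (gm y₂)) :=
                    lintegral_lintegral_swap hG2.aemeasurable
                _ ≤ ∫⁻ y₂, ENNReal.ofReal (2 * ρ) *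
                      (ENNReal.ofReal (gp y₁) * ENNReal.ofReal (gm y₂)) := by
                    apply lintegral_mono; intro y₂
                    dsimp only
                    rw [lintegral_mul_const' _ _ (by
                      exact ENNReal.mul_ne_top ENNReal.ofReal_ne_top ENNReal.ofReal_ne_top)]
                    have hxint : ∫⁻ x, ENNReal.ofReal |p (x - f y₁) - p (x - f y₂)|
                        = ENNReal.ofReal (∫ x, |p (x - f y₁) - p (x - f y₂)|) :=
                      (MeasureTheory.ofReal_integral_eq_lintegral_ofReal (habs_diff_i _ _)
                        (Filter.Eventually.of_forall fun x => abs_nonneg _)).symm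
                    rw [hxint]
                    exact mul_le_mul_of_nonneg_right (ENNReal.ofReal_le_ofReal
                      (hρ_ge _ _ (hf_bdd y₁) (hf_bdd y₂))) (by positivity)
                _ = ENNReal.ofReal (gp y₁) * (ENNReal.ofReal (2 * ρ) * ENNReal.ofReal m) := by
                    rw [lintegral_const_mul' _ _ ENNReal.ofReal_ne_top]
                    rw [lintegral_const_mul' _ _ ENNReal.ofReal_ne_top, hlgm]
                    ring
          _ = ENNReal.ofReal (2 * ρ) * (ENNReal.ofReal m * ENNReal.ofReal m) := by
              rw [lintegral_mul_const' _ _ (by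
                exact ENNReal.mul_ne_top ENNReal.ofReal_ne_top ENNReal.ofReal_ne_top), hlgp]
              ring
      have hfinal : ENNReal.ofReal m * ∫⁻ x, ENNReal.ofReal (A x)
          ≤ ENNReal.ofReal m * ENNReal.ofReal (ρ * T) := by
        calc ENNReal.ofReal m * ∫⁻ x, ENNReal.ofReal (A x)
            = ∫⁻ x, ENNReal.ofReal m * ENNReal.ofReal (A x) :=
              (lintegral_const_mul' _ _ ENNReal.ofReal_ne_top).symm
          _ = ∫⁻ x, ENNReal.ofReal (m * A x) :=
              lintegral_congr fun x => (ENNReal.ofReal_mul hm_nonneg).symm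
          _ ≤ ∫⁻ x, ∫⁻ y₁, ∫⁻ y₂,
              ENNReal.ofReal |p (x - f y₁) - p (x - f y₂)| *
                (ENNReal.ofReal (gp y₁) * ENNReal.ofReal (gm y₂)) :=
              lintegral_mono_ae hcore
          _ ≤ ENNReal.ofReal (2 * ρ) * (ENNReal.ofReal m * ENNReal.ofReal m) := hswap_bound
          _ = ENNReal.ofReal m * ENNReal.ofReal (ρ * T) := by
              rw [hT_eq, ← ENNReal.ofReal_mul hm_nonneg,
                ← ENNReal.ofReal_mul (by linarith : (0:ℝ) ≤ 2 * ρ),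
                ← ENNReal.ofReal_mul hm_nonneg]
              congr 1; ring
      exact (ENNReal.mul_le_mul_iff_right (by
          simp only [ne_eq, ENNReal.ofReal_eq_zero, not_le]; linarith)
        ENNReal.ofReal_ne_top).1 hfinal
  -- combine
  have hT_nonneg : 0 ≤ T := by rw [hTdef]; exact integral_nonneg fun y => abs_nonneg _
  have hT_ineq : T ≤ ρ * T + D := by
    have hstep1 : ENNReal.ofReal T = ∫⁻ x, ENNReal.ofReal |g x| := by
      rw [hTdef]
      exact MeasureTheory.ofReal_integral_eq_lintegral_ofReal (hψf_i.sub hψf0_i).abs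
        (Filter.Eventually.of_forall fun y => abs_nonneg _)
    have h1 : ENNReal.ofReal T ≤ ENNReal.ofReal (ρ * T) + ENNReal.ofReal D := by
      rw [hstep1]
      calc ∫⁻ x, ENNReal.ofReal |g x|
          ≤ ∫⁻ x, (ENNReal.ofReal (A x) + ENNReal.ofReal (B x)) := by
            apply lintegral_mono_ae
            filter_upwards [hptwise] with x hx
            exact le_trans (ENNReal.ofReal_le_ofReal hx) ENNReal.ofReal_add_le
        _ = (∫⁻ x, ENNReal.ofReal (A x)) + ∫⁻ x, ENNReal.ofReal (B x) :=
            lintegral_add_left' hA_meas _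
        _ ≤ ENNReal.ofReal (ρ * T) + ENNReal.ofReal D := add_le_add hA_bound hB_bound
    rw [← ENNReal.ofReal_add (mul_nonneg hρ_nonneg hT_nonneg) hD_nonneg] at h1
    exact (ENNReal.ofReal_le_ofReal_iff (by positivity)).1 h1
  have hT_le : T ≤ (1 - ρ)⁻¹ * D := by
    have h2 : 0 < 1 - ρ := by linarith
    rw [inv_mul_eq_div, le_div_iff₀ h2]
    nlinarith
  -- step A: Hellinger ≤ total variation
  have hpt : ∀ x, (Real.sqrt (ψf x) - Real.sqrt (ψf0 x)) ^ 2 ≤ |g x| := by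
    intro x
    have ha := hψf_nonneg x; have hb := hψf0_nonneg x
    have h1 : Real.sqrt (ψf x) ^ 2 = ψf x := Real.sq_sqrt ha
    have h2 : Real.sqrt (ψf0 x) ^ 2 = ψf0 x := Real.sq_sqrt hb
    have hs := Real.sqrt_nonneg (ψf x); have ht := Real.sqrt_nonneg (ψf0 x)
    simp only [hg]
    rcases le_total (ψf0 x) (ψf x) with h | h
    · rw [abs_of_nonneg (by linarith)]
      have hmono : Real.sqrt (ψf0 x) ≤ Real.sqrt (ψf x) := Real.sqrt_le_sqrt h
      nlinarith [mul_nonneg ht (sub_nonneg.2 hmono)]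
    · rw [abs_of_nonpos (by linarith)]
      have hmono : Real.sqrt (ψf x) ≤ Real.sqrt (ψf0 x) := Real.sqrt_le_sqrt h
      nlinarith [mul_nonneg hs (sub_nonneg.2 hmono)]
  have habs_g_i : Integrable (fun x => |g x|) := (hψf_i.sub hψf0_i).abs
  have hsq_meas : Measurable fun x => (Real.sqrt (ψf x) - Real.sqrt (ψf0 x)) ^ 2 :=
    ((continuous_sqrt.measurable.comp hψf_meas).sub
      (continuous_sqrt.measurable.comp hψf0_meas)).pow_const 2
  have hsq_i : Integrable fun x => (Real.sqrt (ψf x) - Real.sqrt (ψf0 x)) ^ 2 :=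
    habs_g_i.mono' hsq_meas.aestronglyMeasurable
      (Filter.Eventually.of_forall fun x => by
        rw [Real.norm_eq_abs, abs_of_nonneg (sq_nonneg _)]; exact hpt x)
  calc ∫ x, (Real.sqrt (ψf x) - Real.sqrt (ψf0 x)) ^ 2
      ≤ ∫ x, |g x| := integral_mono hsq_i habs_g_i hpt
    _ = T := by rw [hTdef]
    _ ≤ (1 - ρ)⁻¹ * D := hT_le
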